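/- The graph C3' (a triangle with one pendant edge attached to one of its vertices, i.e., 4 vertices a,b,c,d with edges ab, bc, ca, ad) with the unweighted non-normalized Laplacian satisfies CD(0,∞): for every vertex x and every function f, Γ₂(f)(x) ≥ 0. -/

import Mathlib

open Finset

variable {V : Type*}

/-- Unweighted non-normalized graph Laplacian. -/
noncomputable def nnLap (G : SimpleGraph V) [G.LocallyFinite] (f : V → ℝ) (x : V) : ℝ :=
  ∑ y ∈ G.neighborFinset x, (f y - f x)

/-- Unweighted normalized graph Laplacian. -/
noncomputable def nLap (G : SimpleGraph V) [G.LocallyFinite] (f : V → ℝ) (x : V) : ℝ :=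
  (∑ y ∈ G.neighborFinset x, (f y - f x)) / (G.degree x : ℝ)

/-- Bakry–Émery carré du champ operator Γ for a Laplacian `L`. -/
noncomputable def gam (L : (V → ℝ) → V → ℝ) (f g : V → ℝ) (x : V) : ℝ :=
  (L (f * g) x - f x * L g x - g x * L f x) / 2

/-- Iterated carré du champ operator Γ₂ for a Laplacian `L`. -/
noncomputable def gam2 (L : (V → ℝ) → V → ℝ) (f g : V → ℝ) (x : V) : ℝ :=
  (L (gam L f g) x - gam L f (L g) x - gam L (L f) g x) / 2

/-- `G` has no 4-cycle subgraph, equivalently any two distinct vertices have at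
most one common neighbor. -/
def C4Free (G : SimpleGraph V) : Prop :=
  ∀ ⦃u v a b : V⦄, u ≠ v → G.Adj u a → G.Adj a v → G.Adj u b → G.Adj b v → a = b

/-- The triangle with one pendant edge: vertices `a=0,b=1,c=2,d=3`, edges
`ab, bc, ca, ad`. -/
def C3' : SimpleGraph (Fin 4) :=
  SimpleGraph.fromRel
    (fun u v => (u = 0 ∧ v = 1) ∨ (u = 1 ∧ v = 2) ∨ (u = 0 ∧ v = 2) ∨ (u = 0 ∧ v = 3))

noncomputable instance : C3'.LocallyFinite := fun _ => Fintype.ofFinite _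

lemma nb0 : C3'.neighborFinset 0 = {1,2,3} := by
  ext y; rw [SimpleGraph.mem_neighborFinset]; simp only [C3', SimpleGraph.fromRel_adj]; fin_cases y <;> decide

lemma nb1 : C3'.neighborFinset 1 = {0,2} := by
  ext y; rw [SimpleGraph.mem_neighborFinset]; simp only [C3', SimpleGraph.fromRel_adj]; fin_cases y <;> decide

lemma nb2 : C3'.neighborFinset 2 = {0,1} := by
  ext y; rw [SimpleGraph.mem_neighborFinset]; simp only [C3', SimpleGraph.fromRel_adj]; fin_cases y <;> decide

lemma nb3 : C3'.neighborFinset 3 = {0} := by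
  ext y; rw [SimpleGraph.mem_neighborFinset]; simp only [C3', SimpleGraph.fromRel_adj]; fin_cases y <;> decide

lemma nnLap0 (g : Fin 4 → ℝ) :
    nnLap C3' g 0 = (g 1 - g 0) + ((g 2 - g 0) + (g 3 - g 0)) := by
  rw [nnLap, nb0]
  rw [show ({1,2,3} : Finset (Fin 4)) = insert 1 (insert 2 {3}) from rfl,
    Finset.sum_insert (by decide), Finset.sum_insert (by decide), Finset.sum_singleton]

lemma nnLap1 (g : Fin 4 → ℝ) :
    nnLap C3' g 1 = (g 0 - g 1) + (g 2 - g 1) := by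
  rw [nnLap, nb1]
  rw [show ({0,2} : Finset (Fin 4)) = insert 0 {2} from rfl,
    Finset.sum_insert (by decide), Finset.sum_singleton]

lemma nnLap2 (g : Fin 4 → ℝ) :
    nnLap C3' g 2 = (g 0 - g 2) + (g 1 - g 2) := by
  rw [nnLap, nb2]
  rw [show ({0,1} : Finset (Fin 4)) = insert 0 {1} from rfl,
    Finset.sum_insert (by decide), Finset.sum_singleton]

lemma nnLap3 (g : Fin 4 → ℝ) :
    nnLap C3' g 3 = g 0 - g 3 := by
  rw [nnLap, nb3, Finset.sum_singleton]

/-- The graph `C₃'` (triangle with one pendant edge) with the unweighted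
non-normalized Laplacian satisfies `CD(0,∞)`. -/
theorem stmt_11 (x : Fin 4) (f : Fin 4 → ℝ) :
    0 ≤ gam2 (nnLap C3') f f x := by
  have hx : x = 0 ∨ x = 1 ∨ x = 2 ∨ x = 3 := by fin_cases x <;> simp
  rcases hx with h | h | h | h <;> subst h <;>
    simp only [gam2, gam, nnLap0, nnLap1, nnLap2, nnLap3, Pi.mul_apply]
  · nlinarith [sq_nonneg (3*f 0 - f 1 - f 2 - f 3), sq_nonneg (f 1 - f 2)]
  · nlinarith [sq_nonneg (5*f 0 - 3*f 1 - f 2 - f 3),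
      sq_nonneg (32*f 1 - 31*f 2 - f 3), sq_nonneg (f 2 - f 3)]
  · nlinarith [sq_nonneg (5*f 0 - f 1 - 3*f 2 - f 3),
      sq_nonneg (33*f 1 - 31*f 2 - 2*f 3), sq_nonneg (f 2 - f 3)]
  · nlinarith [sq_nonneg (5*f 0 - f 1 - f 2 - 3*f 3),
      sq_nonneg (3*f 1 - 2*f 2 - f 3), sq_nonneg (f 2 - f 3)]
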